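/- A partition of n ≥ 1 is join-irreducible in the dominance lattice if and only if it has one of the following four forms (m, l, s ≥ 1): (A) (k,…,k) with m copies of k, k ≥ 2; (B) m copies of k followed by l copies of k−1, k ≥ 2; (C) m copies of k followed by l copies of 1, k ≥ 3; (D) m copies of k+2, then l copies of k+1, then s copies of 1, k ≥ 2. -/

import Mathlib

def IsPartition (n : ℕ) (a : ℕ → ℕ) : Prop :=
  (∀ i j, i ≤ j → a j ≤ a i) ∧ (∑ i ∈ Finset.range n, a i = n) ∧ (∀ i, n ≤ i → a i = 0)

def Dom (a b : ℕ → ℕ) : Prop :=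
  ∀ j, ∑ i ∈ Finset.range j, a i ≤ ∑ i ∈ Finset.range j, b i

def IsSupOf (n : ℕ) (a b c : ℕ → ℕ) : Prop :=
  IsPartition n c ∧ Dom a c ∧ Dom b c ∧
    ∀ d, IsPartition n d → Dom a d → Dom b d → Dom c d

def IsInfOf (n : ℕ) (a b c : ℕ → ℕ) : Prop :=
  IsPartition n c ∧ Dom c a ∧ Dom c b ∧
    ∀ d, IsPartition n d → Dom d a → Dom d b → Dom d c

/-- The minimum partition (1,1,…,1) of n. -/
def ones (n : ℕ) : ℕ → ℕ := fun i => if i < n then 1 else 0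

/-- A partition of n is join-irreducible in the dominance lattice: it is not
the minimum and whenever it is the join of two partitions it equals one of them. -/
def JoinIrr (n : ℕ) (a : ℕ → ℕ) : Prop :=
  IsPartition n a ∧ a ≠ ones n ∧
    ∀ b c, IsPartition n b → IsPartition n c → IsSupOf n b c a → a = b ∨ a = c
namespace Bry

def S (a : ℕ → ℕ) (j : ℕ) : ℕ := ∑ i ∈ Finset.range j, a i

lemma S_succ (a : ℕ → ℕ) (j : ℕ) : S a (j+1) = S a j + a j := Finset.sum_range_succ a j

lemma S_split (a : ℕ → ℕ) {lo j : ℕ} (h : lo ≤ j) :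
    S a j = S a lo + ∑ i ∈ Finset.Ico lo j, a i := by
  unfold S
  rw [Finset.range_eq_Ico]
  rw [Finset.range_eq_Ico]; exact (Finset.sum_Ico_consecutive a (Nat.zero_le lo) h).symm

lemma Ico_sum_le {b : ℕ → ℕ} (hmono : ∀ i j, i ≤ j → b j ≤ b i) (i j : ℕ) :
    ∑ t ∈ Finset.Ico i j, b t ≤ b i * (j - i) := by
  calc ∑ t ∈ Finset.Ico i j, b t ≤ (Finset.Ico i j).card • b i := by
        apply Finset.sum_le_card_nsmul
        intro t ht
        exact hmono i t (Finset.mem_Ico.mp ht).1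
  _ = b i * (j - i) := by rw [Nat.card_Ico, smul_eq_mul, mul_comm]

def mov (a : ℕ → ℕ) (r s : ℕ) : ℕ → ℕ :=
  fun i => if i = r then a r - 1 else if i = s then a s + 1 else a i

structure Valid (n : ℕ) (a : ℕ → ℕ) (r s : ℕ) : Prop where
  hrs : r < s
  hsn : s < n
  h1 : a (r+1) + 1 ≤ a r
  h2 : a s + 1 ≤ a (s-1)
  h3 : r + 1 = s → a s + 2 ≤ a r

lemma mov_S {a : ℕ → ℕ} {r s : ℕ} (har : 1 ≤ a r) (hrs : r < s) (j : ℕ) :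
    S (mov a r s) j + (if r < j then 1 else 0) = S a j + (if s < j then 1 else 0) := by
  induction j with
  | zero => simp [S]
  | succ j ih =>
    rw [S_succ, S_succ]
    by_cases hjr : j = r
    · have hM : mov a r s j = a r - 1 := by simp [mov, hjr]
      rw [hM]; subst hjr; split_ifs at ih ⊢ <;> omega
    · by_cases hjs : j = s
      · have hM : mov a r s j = a s + 1 := by
          simp only [mov]; rw [if_neg hjr, if_pos hjs]
        rw [hM]; subst hjs; split_ifs at ih ⊢ <;> omega
      · have hM : mov a r s j = a j := by
          simp only [mov]; rw [if_neg hjr, if_neg hjs]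
        rw [hM]; split_ifs at ih ⊢ <;> omega

lemma mov_S_le {a : ℕ → ℕ} {r s : ℕ} (har : 1 ≤ a r) (hrs : r < s) (j : ℕ) :
    S (mov a r s) j ≤ S a j := by
  have := mov_S har hrs j; split_ifs at this <;> omega

lemma mov_S_int {a : ℕ → ℕ} {r s : ℕ} (har : 1 ≤ a r) (hrs : r < s) {j : ℕ}
    (h1 : r < j) (h2 : j ≤ s) : S (mov a r s) j + 1 = S a j := by
  have := mov_S har hrs j; split_ifs at this <;> omega

lemma mov_S_out {a : ℕ → ℕ} {r s : ℕ} (har : 1 ≤ a r) (hrs : r < s) {j : ℕ}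
    (h : ¬(r < j ∧ j ≤ s)) : S (mov a r s) j = S a j := by
  have := mov_S har hrs j; split_ifs at this <;> omega

lemma Valid.har {n : ℕ} {a : ℕ → ℕ} {r s : ℕ} (v : Valid n a r s) : 1 ≤ a r := by
  have := v.h1; omega

lemma mov_isPartition {n : ℕ} {a : ℕ → ℕ} {r s : ℕ}
    (ha : IsPartition n a) (v : Valid n a r s) : IsPartition n (mov a r s) := by
  obtain ⟨hmono, hsum, hsupp⟩ := ha
  have har : 1 ≤ a r := v.har
  refine ⟨?_, ?_, ?_⟩
  · have key : ∀ i, mov a r s (i+1) ≤ mov a r s i := by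
      intro i
      by_cases hir : i = r
      · subst hir
        by_cases his : i + 1 = s
        · have e1 : mov a i s i = a i - 1 := by
            simp [mov]
          have e2 : mov a i s (i+1) = a s + 1 := by
            simp only [mov]; rw [if_neg (by omega), if_pos his]
          rw [e1, e2]; have := v.h3 his; omega
        · have e1 : mov a i s i = a i - 1 := by
            simp [mov]
          have e2 : mov a i s (i+1) = a (i+1) := by
            simp only [mov]; rw [if_neg (by omega), if_neg his]
          rw [e1, e2]; have := v.h1; omega
      · by_cases his : i = s
        · subst his
          have e1 : mov a r i i = a i + 1 := by
            simp only [mov]; rw [if_neg (by have := v.hrs; omega)]; simp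
          have e2 : mov a r i (i+1) = a (i+1) := by
            simp only [mov]; rw [if_neg (by have := v.hrs; omega), if_neg (by omega)]
          rw [e1, e2]; have := hmono i (i+1) (by omega); omega
        · by_cases hir2 : i + 1 = r
          · have e1 : mov a r s i = a i := by
              simp only [mov]; rw [if_neg hir, if_neg (by have := v.hrs; omega)]
            have e2 : mov a r s (i+1) = a r - 1 := by
              simp only [mov]; rw [if_pos hir2]
            rw [e1, e2]; have := hmono i r (by omega); omega
          · by_cases his2 : i + 1 = s
            · have e1 : mov a r s i = a i := by
                simp only [mov]; rw [if_neg hir, if_neg his]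
              have e2 : mov a r s (i+1) = a s + 1 := by
                simp only [mov]; rw [if_neg hir2, if_pos his2]
              rw [e1, e2]
              have e3 : s - 1 = i := by omega
              have := v.h2; rw [e3] at this; omega
            · have e1 : mov a r s i = a i := by
                simp only [mov]; rw [if_neg hir, if_neg his]
              have e2 : mov a r s (i+1) = a (i+1) := by
                simp only [mov]; rw [if_neg hir2, if_neg his2]
              rw [e1, e2]; exact hmono i (i+1) (by omega)
    intro i j hij
    exact antitone_nat_of_succ_le key hij
  · have hS : S a n = n := hsum
    have := mov_S har v.hrs n
    have hr : r < n := by have := v.hrs; have := v.hsn; omega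
    have hs : s < n := v.hsn
    show S (mov a r s) n = n
    split_ifs at this <;> omega
  · intro i hi
    have hir : ¬ (i = r) := by have := v.hrs; have := v.hsn; omega
    have his : ¬ (i = s) := by have := v.hsn; omega
    simp only [mov]; rw [if_neg hir, if_neg his]
    exact hsupp i hi

lemma sup2 {n : ℕ} {a : ℕ → ℕ} {r s r' s' : ℕ}
    (ha : IsPartition n a) (v1 : Valid n a r s) (v2 : Valid n a r' s')
    (hord : s ≤ r' + 1) (hadj : s = r' + 1 → a (s-1) = a s + 1) :
    IsSupOf n (mov a r s) (mov a r' s') a ∧ mov a r s ≠ a ∧ mov a r' s' ≠ a := by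
  have har : 1 ≤ a r := v1.har
  have har' : 1 ≤ a r' := v2.har
  refine ⟨⟨ha, fun j => mov_S_le har v1.hrs j, fun j => mov_S_le har' v2.hrs j, ?_⟩, ?_, ?_⟩
  · intro d hd hbd hcd
    intro j
    show S a j ≤ S d j
    by_cases hj1 : r < j ∧ j ≤ s
    · by_cases hj2 : r' < j ∧ j ≤ s'
      · -- overlap: j = s = r' + 1
        have hjs : j = s := by omega
        have hr'1 : s = r' + 1 := by omega
        have heq := hadj hr'1
        rw [hjs]
        have h5 : S a (s-1) ≤ S d (s-1) := by
          have h : S (mov a r' s') (s-1) ≤ S d (s-1) := hcd (s-1)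
          have e : S (mov a r' s') (s-1) = S a (s-1) := by
            apply mov_S_out har' v2.hrs; omega
          rw [e] at h; exact h
        have h6 : S a (s+1) ≤ S d (s+1) := by
          have h : S (mov a r s) (s+1) ≤ S d (s+1) := hbd (s+1)
          have e : S (mov a r s) (s+1) = S a (s+1) := by
            apply mov_S_out har v1.hrs; omega
          rw [e] at h; exact h
        have h7 : S a s ≤ S d s + 1 := by
          have h : S (mov a r' s') s ≤ S d s := hcd s
          have e : S (mov a r' s') s + 1 = S a s := by
            apply mov_S_int har' v2.hrs (by omega) (by have := v2.hrs; omega)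
          omega
        by_contra hlt
        have e1 : S d s = S d (s-1) + d (s-1) := by
          have := S_succ d (s-1)
          rw [Nat.sub_add_cancel (by have := v1.hrs; omega)] at this
          omega
        have e2 : S a s = S a (s-1) + a (s-1) := by
          have := S_succ a (s-1)
          rw [Nat.sub_add_cancel (by have := v1.hrs; omega)] at this
          omega
        have e3 : S d (s+1) = S d s + d s := S_succ d s
        have e4 : S a (s+1) = S a s + a s := S_succ a s
        have hmd : d s ≤ d (s-1) := hd.1 _ _ (by omega)
        omega
      · have h : S (mov a r' s') j ≤ S d j := hcd j
        have e : S (mov a r' s') j = S a j := mov_S_out har' v2.hrs hj2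
        rw [e] at h; exact h
    · have h : S (mov a r s) j ≤ S d j := hbd j
      have e : S (mov a r s) j = S a j := mov_S_out har v1.hrs hj1
      rw [e] at h; exact h
  · intro h
    have h2 := congrFun h r
    simp [mov] at h2
    omega
  · intro h
    have h2 := congrFun h r'
    simp [mov] at h2
    omega

lemma size_lt {n : ℕ} {a : ℕ → ℕ} (ha : IsPartition n a) {u v : ℕ}
    (hu : u < v) (h2 : 2 ≤ a u) (h1 : ∀ i, i < v → 1 ≤ a i) : v < n := by
  by_contra h
  push_neg at h
  have hun : u < n := by
    by_contra h'
    have := ha.2.2 u (by omega)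
    omega
  have hlt : ∑ i ∈ Finset.range n, (fun _ => 1 : ℕ → ℕ) i < ∑ i ∈ Finset.range n, a i := by
    apply Finset.sum_lt_sum
    · intro i hi
      exact h1 i (by have := Finset.mem_range.mp hi; omega)
    · exact ⟨u, Finset.mem_range.mpr hun, by omega⟩
  have hsum := ha.2.1
  simp at hlt
  omega

lemma exists_move {n : ℕ} {a : ℕ → ℕ} (ha : IsPartition n a) {r : ℕ} (hr : 2 ≤ a r) :
    ∃ r' s', r ≤ r' ∧ Valid n a r' s' := by
  have hrn : r < n := by
    by_contra h
    have := ha.2.2 r (by omega)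
    omega
  set r0 := Nat.findGreatest (fun i => 2 ≤ a i) n with hr0def
  have hr0P : 2 ≤ a r0 := Nat.findGreatest_spec (P := fun i => 2 ≤ a i) (le_of_lt hrn) hr
  have hrr0 : r ≤ r0 := Nat.le_findGreatest (P := fun i => 2 ≤ a i) (le_of_lt hrn) hr
  have hr0n : r0 < n := by
    by_contra h
    have := ha.2.2 r0 (by omega)
    omega
  have hnext : a (r0 + 1) ≤ 1 := by
    by_contra h
    push_neg at h
    have h2 : r0 + 1 ≤ Nat.findGreatest (fun i => 2 ≤ a i) n :=
      Nat.le_findGreatest (P := fun i => 2 ≤ a i) (by omega) (by omega)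
    omega
  by_cases hgap : a (r0+1) + 2 ≤ a r0
  · refine ⟨r0, r0+1, hrr0, ⟨by omega, ?_, by omega, ?_, fun _ => hgap⟩⟩
    · exact size_lt ha (u := r0) (v := r0+1) (by omega) hr0P
        (fun i hi => le_trans (by omega) (ha.1 i r0 (by omega)))
    · have e : r0 + 1 - 1 = r0 := by omega
      rw [e]; omega
  · have h11 : a (r0+1) = 1 := by omega
    have h22 : a r0 = 2 := by omega
    have hex : ∃ i, a i = 0 := ⟨n, ha.2.2 n le_rfl⟩
    have hq0 : a (Nat.find hex) = 0 := Nat.find_spec hex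
    have hqmin : ∀ i, i < Nat.find hex → a i ≠ 0 := fun i hi => Nat.find_min hex hi
    set q := Nat.find hex with hqdef
    have hq1 : r0 + 1 < q := by
      by_contra h
      push_neg at h
      have := ha.1 q (r0+1) h
      omega
    have hqn : q < n := size_lt ha (u := r0) (v := q) (by omega) (by omega)
      (fun i hi => Nat.one_le_iff_ne_zero.mpr (hqmin i hi))
    refine ⟨r0, q, hrr0, ⟨by omega, hqn, by omega, ?_, fun h => absurd h (by omega)⟩⟩
    have := hqmin (q-1) (by omega)
    omega

lemma ml2 {b : ℕ → ℕ} (hmono : ∀ i j, i ≤ j → b j ≤ b i) {x α β : ℕ} (hx : 1 ≤ x) (hα : 1 ≤ α)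
    (hpre1 : ∀ i, i ≤ α → S b i ≤ x * i)
    (hpre2 : ∀ d, d ≤ β → S b (α + d) ≤ x * α + (x-1) * d)
    (heq : S b (α + β) = x * α + (x-1) * β) :
    (∀ i, i < α → b i = x) ∧ (∀ i, α ≤ i → i < α + β → b i = x - 1) := by
  have hb0 : b 0 ≤ x := by
    have h := hpre1 1 hα
    have e : S b 1 = S b 0 + b 0 := S_succ b 0
    have e0 : S b 0 = 0 := by simp [S]
    omega
  have hbx : ∀ i, b i ≤ x := fun i => le_trans (hmono 0 i (Nat.zero_le i)) hb0
  have hsuf : ∀ i, i ≤ α + β → S b (α+β) ≤ S b i + b i * (α + β - i) := by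
    intro i hi
    rw [S_split b hi]
    have := Ico_sum_le hmono i (α+β)
    omega
  have hstep1 : ∀ i, i < α → b i = x := by
    intro i hi
    have h1 := hsuf i (by omega)
    have h2 := hpre1 i (by omega)
    have hge : x ≤ b i := by
      by_contra h
      push_neg at h
      have hb : b i ≤ x - 1 := by omega
      have hmul : b i * (α+β-i) ≤ (x-1) * (α-i) + (x-1) * β := by
        calc b i * (α+β-i) ≤ (x-1) * (α+β-i) := Nat.mul_le_mul_right _ hb
        _ = (x-1) * (α-i) + (x-1) * β := by rw [← Nat.mul_add]; congr 1; omega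
      have e2 : x * α = x * i + x * (α - i) := by
        rw [← Nat.mul_add]; congr 1; omega
      have e3 : (x-1) * (α - i) + (α - i) = x * (α - i) := by
        have e4 : x - 1 + 1 = x := by omega
        calc (x-1) * (α - i) + (α - i) = ((x-1) + 1) * (α - i) := by ring
        _ = x * (α - i) := by rw [e4]
      have hgi : 1 ≤ α - i := by omega
      omega
    have := hbx i
    omega
  have hSα : S b α = x * α := by
    have le := hpre1 α le_rfl
    have : S b α = ∑ i ∈ Finset.range α, x :=
      Finset.sum_congr rfl (fun i hi => hstep1 i (Finset.mem_range.mp hi))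
    rw [this]
    simp [mul_comm]
  have hge2 : ∀ i, α ≤ i → i < α + β → x - 1 ≤ b i := by
    intro i h1i h2i
    rcases Nat.eq_zero_or_pos (x - 1) with h0 | h0
    · omega
    have h1 := hsuf i (by omega)
    have h2 := hpre2 (i - α) (by omega)
    have e : α + (i - α) = i := by omega
    rw [e] at h2
    by_contra h
    push_neg at h
    have hb : b i + 1 ≤ x - 1 := by omega
    have hmul : (b i + 1) * (α+β-i) ≤ (x-1) * (α+β-i) := Nat.mul_le_mul_right _ hb
    have e5 : (b i + 1) * (α+β-i) = b i * (α+β-i) + (α+β-i) := by ring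
    have e4 : (x-1) * (i-α) + (x-1) * (α+β-i) = (x-1) * β := by
      rw [← Nat.mul_add]; congr 1; omega
    have hT : 1 ≤ α + β - i := by omega
    omega
  have hend : ∀ i, α ≤ i → i < α + β → b i = x - 1 := by
    intro i h1i h2i
    by_contra hne
    have hgt : x - 1 < b i := by
      have := hge2 i h1i h2i
      omega
    have hsum2 : ∑ t ∈ Finset.Ico α (α+β), b t = (x-1) * β := by
      have := S_split b (show α ≤ α+β by omega)
      omega
    have hconst : (∑ _t ∈ Finset.Ico α (α+β), (x-1)) = (x-1) * β := by
      rw [Finset.sum_const, Nat.card_Ico, smul_eq_mul, mul_comm]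
      congr 1
      omega
    have hlt : (x-1) * β < ∑ t ∈ Finset.Ico α (α+β), b t := by
      calc (x-1) * β = ∑ _t ∈ Finset.Ico α (α+β), (x-1) := hconst.symm
      _ < ∑ t ∈ Finset.Ico α (α+β), b t := by
          apply Finset.sum_lt_sum
          · intro t ht
            have := Finset.mem_Ico.mp ht
            exact hge2 t this.1 this.2
          · exact ⟨i, Finset.mem_Ico.mpr ⟨h1i, h2i⟩, hgt⟩
    omega
  exact ⟨hstep1, hend⟩

lemma ml3 {b : ℕ → ℕ} (hmono : ∀ i j, i ≤ j → b j ≤ b i) {N j c : ℕ}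
    (hle1 : ∀ i, j ≤ i → b i ≤ 1)
    (hz : ∀ i, N ≤ i → b i = 0)
    (hsum : ∑ t ∈ Finset.Ico j N, b t = c) :
    (∀ i, j ≤ i → i < j + c → b i = 1) ∧ (∀ i, j + c ≤ i → b i = 0) := by
  have part1 : ∀ i, j ≤ i → i < j + c → b i = 1 := by
    intro i h1 h2
    have hjN : j ≤ N := by
      by_contra h
      push_neg at h
      rw [Finset.Ico_eq_empty (by omega)] at hsum
      simp at hsum
      omega
    by_contra h
    have hbi : b i = 0 := by have := hle1 i h1; omega
    have hafter : ∀ t, i ≤ t → b t = 0 := fun t ht => by have := hmono i t ht; omega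
    have hm : ∑ t ∈ Finset.Ico j N, b t
        = ∑ t ∈ Finset.Ico j (min i N), b t + ∑ t ∈ Finset.Ico (min i N) N, b t :=
      (Finset.sum_Ico_consecutive _ (le_min h1 hjN) (min_le_right _ _)).symm
    have hz2 : ∑ t ∈ Finset.Ico (min i N) N, b t = 0 := by
      apply Finset.sum_eq_zero
      intro t ht
      have h3 := (Finset.mem_Ico.mp ht).1
      rcases (by omega : i ≤ t ∨ N ≤ t) with h4 | h4
      · exact hafter t h4
      · exact hz t h4
    have hb1 : ∑ t ∈ Finset.Ico j (min i N), b t ≤ min i N - j := by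
      calc ∑ t ∈ Finset.Ico j (min i N), b t ≤ (Finset.Ico j (min i N)).card • 1 := by
            apply Finset.sum_le_card_nsmul
            intro t ht
            exact hle1 t (Finset.mem_Ico.mp ht).1
      _ = min i N - j := by rw [Nat.card_Ico, smul_eq_mul, mul_one]
    omega
  refine ⟨part1, ?_⟩
  intro i hi
  rcases Nat.lt_or_ge i N with h | h
  · have hsplit := Finset.sum_Ico_consecutive b (show j ≤ j + c by omega)
      (show j + c ≤ N by omega)
    have h1 : ∑ t ∈ Finset.Ico j (j+c), b t = c := by
      have : ∀ t ∈ Finset.Ico j (j+c), b t = 1 := by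
        intro t ht
        have := Finset.mem_Ico.mp ht
        exact part1 t this.1 this.2
      rw [Finset.sum_congr rfl this]
      simp
    have h0 : ∑ t ∈ Finset.Ico (j+c) N, b t = 0 := by omega
    exact (Finset.sum_eq_zero_iff.mp h0) i (Finset.mem_Ico.mpr ⟨hi, h⟩)
  · exact hz i h

lemma joinIrr_of_key {n : ℕ} {a : ℕ → ℕ} (ha : IsPartition n a) (h2 : 2 ≤ a 0)
    {r s : ℕ} (v : Valid n a r s)
    (key : ∀ b j, IsPartition n b → Dom b a → r < j → j ≤ s → S b j = S a j → b = a) :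
    JoinIrr n a := by
  have hn1 : 1 ≤ n := by
    by_contra h
    have := ha.2.2 0 (by omega)
    omega
  refine ⟨ha, ?_, ?_⟩
  · intro h
    have hc := congrFun h 0
    simp only [ones] at hc
    rw [if_pos (by omega : (0:ℕ) < n)] at hc
    omega
  · intro p q hp hq hsup
    by_contra hor
    push_neg at hor
    obtain ⟨h1, h2'⟩ := hor
    have har : 1 ≤ a r := v.har
    have dom1 : Dom p (mov a r s) := by
      intro j
      show S p j ≤ S (mov a r s) j
      by_cases hj : r < j ∧ j ≤ s
      · have e := mov_S_int har v.hrs hj.1 hj.2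
        have hle : S p j ≤ S a j := hsup.2.1 j
        have hne : S p j ≠ S a j := fun hh => h1 (key p j hp hsup.2.1 hj.1 hj.2 hh).symm
        omega
      · rw [mov_S_out har v.hrs hj]
        exact hsup.2.1 j
    have dom2 : Dom q (mov a r s) := by
      intro j
      show S q j ≤ S (mov a r s) j
      by_cases hj : r < j ∧ j ≤ s
      · have e := mov_S_int har v.hrs hj.1 hj.2
        have hle : S q j ≤ S a j := hsup.2.2.1 j
        have hne : S q j ≠ S a j := fun hh => h2' (key q j hq hsup.2.2.1 hj.1 hj.2 hh).symm
        omega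
      · rw [mov_S_out har v.hrs hj]
        exact hsup.2.2.1 j
    have hda : Dom a (mov a r s) := hsup.2.2.2 (mov a r s) (mov_isPartition ha v) dom1 dom2
    have e := mov_S_int har v.hrs (v.hrs) (le_refl s)
    have := hda s
    have h3 : S a s ≤ S (mov a r s) s := this
    omega

lemma typeA {n : ℕ} {a : ℕ → ℕ} (ha : IsPartition n a) {k m : ℕ} (hk : 2 ≤ k) (hm : 1 ≤ m)
    (hf : ∀ i, a i = if i < m then k else 0) : JoinIrr n a := by
  have hmn : m ≤ n := by
    by_contra h
    have h0 := ha.2.2 n le_rfl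
    have h1 := hf n
    rw [if_pos (by omega)] at h1
    omega
  have hfk : ∀ i, i < m → a i = k := fun i hi => by rw [hf, if_pos hi]
  have hf0 : ∀ i, m ≤ i → a i = 0 := fun i hi => by rw [hf, if_neg (by omega)]
  have hSa : ∀ i, i ≤ m → S a i = k * i := by
    intro i hi
    calc S a i = ∑ t ∈ Finset.range i, k :=
          Finset.sum_congr rfl (fun t ht => hfk t (by have := Finset.mem_range.mp ht; omega))
    _ = k * i := by rw [Finset.sum_const, Finset.card_range, smul_eq_mul, mul_comm]
  have hn : n = k * m := by
    have h1 := S_split a hmn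
    have hz : ∑ t ∈ Finset.Ico m n, a t = 0 :=
      Finset.sum_eq_zero (fun t ht => hf0 t (Finset.mem_Ico.mp ht).1)
    have h2 := hSa m le_rfl
    have h3 : S a n = n := ha.2.1
    omega
  have hmltn : m < n := by
    have : 2 * m ≤ k * m := Nat.mul_le_mul_right m hk
    omega
  have hv : Valid n a (m-1) m := by
    refine ⟨by omega, hmltn, ?_, ?_, ?_⟩
    · rw [(by omega : m - 1 + 1 = m), hf0 m le_rfl, hfk (m-1) (by omega)]; omega
    · rw [hf0 m le_rfl, hfk (m-1) (by omega)]; omega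
    · intro _
      rw [hf0 m le_rfl, hfk (m-1) (by omega)]; omega
  refine joinIrr_of_key ha ?_ hv ?_
  · rw [hfk 0 (by omega)]; exact hk
  · intro b j hb hdom hj1 hj2 hje
    have hjm : j = m := by omega
    rw [hjm] at hje
    have hbS : ∀ jj, S b jj ≤ S a jj := fun jj => hdom jj
    have hml2 := ml2 hb.1 (x := k) (α := m) (β := 0) (by omega) hm
      (fun i hi => le_trans (hbS i) (le_of_eq (hSa i hi)))
      (fun d hd => by
        have : d = 0 := by omega
        subst this
        rw [Nat.add_zero, Nat.mul_zero, Nat.add_zero, hje, hSa m le_rfl])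
      (by rw [Nat.add_zero, Nat.mul_zero, Nat.add_zero, hje, hSa m le_rfl])
    obtain ⟨hh, _⟩ := hml2
    have hbn : S b n = n := hb.2.1
    have hsplit := S_split b hmn
    have hSbm : S b m = k * m := by rw [hje, hSa m le_rfl]
    have htail : ∑ t ∈ Finset.Ico m n, b t = 0 := by omega
    funext i
    rw [hf i]
    by_cases him : i < m
    · rw [if_pos him]; exact hh i him
    · rw [if_neg him]
      rcases Nat.lt_or_ge i n with hin | hin
      · exact (Finset.sum_eq_zero_iff.mp htail) i (Finset.mem_Ico.mpr ⟨by omega, hin⟩)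
      · exact hb.2.2 i hin

lemma S_block {a : ℕ → ℕ} {lo hi v : ℕ} (h : ∀ i, lo ≤ i → i < hi → a i = v) {j : ℕ}
    (h1 : lo ≤ j) (h2 : j ≤ hi) : S a j = S a lo + v * (j - lo) := by
  rw [S_split a h1]
  congr 1
  calc ∑ i ∈ Finset.Ico lo j, a i = ∑ _i ∈ Finset.Ico lo j, v :=
        Finset.sum_congr rfl (fun i hi => by
          have := Finset.mem_Ico.mp hi
          exact h i this.1 (by omega))
  _ = v * (j - lo) := by rw [Finset.sum_const, Nat.card_Ico, smul_eq_mul, mul_comm]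

lemma S_head {a : ℕ → ℕ} {m v : ℕ} (h : ∀ i, i < m → a i = v) {j : ℕ} (hj : j ≤ m) :
    S a j = v * j := by
  have h0 : S a 0 = 0 := by simp [S]
  have := S_block (lo := 0) (hi := m) (v := v) (fun i _ hi => h i hi) (Nat.zero_le j) hj
  simpa [h0] using this

lemma typeC {n : ℕ} {a : ℕ → ℕ} (ha : IsPartition n a) {k m l : ℕ}
    (hk : 3 ≤ k) (hm : 1 ≤ m) (hl : 1 ≤ l)
    (hf : ∀ i, a i = if i < m then k else if i < m + l then 1 else 0) : JoinIrr n a := by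
  have hfk : ∀ i, i < m → a i = k := fun i hi => by rw [hf, if_pos hi]
  have hf1 : ∀ i, m ≤ i → i < m + l → a i = 1 := fun i hi1 hi2 => by
    rw [hf, if_neg (by omega), if_pos hi2]
  have hf0 : ∀ i, m + l ≤ i → a i = 0 := fun i hi => by
    rw [hf, if_neg (by omega), if_neg (by omega)]
  have hpn : m + l ≤ n := by
    by_contra h
    have h0 := ha.2.2 n le_rfl
    have h1 := hf n
    rcases Nat.lt_or_ge n m with h2 | h2
    · rw [if_pos h2] at h1; omega
    · rw [if_neg (by omega), if_pos (by omega)] at h1; omega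
  have hSa1 : ∀ j, j ≤ m → S a j = k * j := fun j hj => S_head hfk hj
  have hSa2 : ∀ d, d ≤ l → S a (m + d) = k * m + d := by
    intro d hd
    have := S_block (lo := m) (hi := m + l) (v := 1) (j := m + d) hf1 (by omega) (by omega)
    rw [this, hSa1 m le_rfl]
    omega
  have hn : n = k * m + l := by
    have h1 := S_split a hpn
    have hz : ∑ t ∈ Finset.Ico (m+l) n, a t = 0 :=
      Finset.sum_eq_zero (fun t ht => hf0 t (Finset.mem_Ico.mp ht).1)
    have h2 := hSa2 l le_rfl
    have h3 : S a n = n := ha.2.1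
    omega
  have hmltn : m < n := by
    have : 2 * m ≤ k * m := Nat.mul_le_mul_right m (by omega)
    omega
  have hv : Valid n a (m-1) m := by
    refine ⟨by omega, hmltn, ?_, ?_, ?_⟩
    · rw [(by omega : m - 1 + 1 = m), hf1 m le_rfl (by omega), hfk (m-1) (by omega)]; omega
    · rw [hf1 m le_rfl (by omega), hfk (m-1) (by omega)]; omega
    · intro _
      rw [hf1 m le_rfl (by omega), hfk (m-1) (by omega)]; omega
  refine joinIrr_of_key ha ?_ hv ?_
  · rw [hfk 0 (by omega)]; omega
  · intro b j hb hdom hj1 hj2 hje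
    have hjm : j = m := by omega
    rw [hjm] at hje
    have hbS : ∀ jj, S b jj ≤ S a jj := fun jj => hdom jj
    have hml2 := ml2 hb.1 (x := k) (α := m) (β := 0) (by omega) hm
      (fun i hi => le_trans (hbS i) (le_of_eq (hSa1 i hi)))
      (fun d hd => by
        have : d = 0 := by omega
        subst this
        rw [Nat.add_zero, Nat.mul_zero, Nat.add_zero, hje, hSa1 m le_rfl])
      (by rw [Nat.add_zero, Nat.mul_zero, Nat.add_zero, hje, hSa1 m le_rfl])
    obtain ⟨hh, _⟩ := hml2
    have hSbm : S b m = k * m := by rw [hje, hSa1 m le_rfl]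
    have hbm : b m ≤ 1 := by
      have h1 : S b (m+1) ≤ S a (m+1) := hbS (m+1)
      have h2 : S a (m+1) = k * m + 1 := by
        have := hSa2 1 hl
        simpa using this
      have h3 := S_succ b m
      omega
    have hble : ∀ i, m ≤ i → b i ≤ 1 := fun i hi => le_trans (hb.1 m i hi) hbm
    have htail : ∑ t ∈ Finset.Ico m n, b t = l := by
      have h1 := S_split b (show m ≤ n by omega)
      have h2 : S b n = n := hb.2.1
      omega
    have hml3 := ml3 hb.1 (N := n) (j := m) (c := l) hble hb.2.2 htail
    obtain ⟨ht1, ht2⟩ := hml3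
    funext i
    rw [hf i]
    by_cases him : i < m
    · rw [if_pos him]; exact hh i him
    · rw [if_neg him]
      by_cases hil : i < m + l
      · rw [if_pos hil]; exact ht1 i (by omega) (by omega)
      · rw [if_neg hil]; exact ht2 i (by omega)

lemma typeD {n : ℕ} {a : ℕ → ℕ} (ha : IsPartition n a) {k m l s : ℕ}
    (hk : 2 ≤ k) (hm : 1 ≤ m) (hl : 1 ≤ l) (hs : 1 ≤ s)
    (hf : ∀ i, a i = if i < m then k + 2 else if i < m + l then k + 1
      else if i < m + l + s then 1 else 0) : JoinIrr n a := by
  have hfk : ∀ i, i < m → a i = k + 2 := fun i hi => by rw [hf, if_pos hi]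
  have hfk1 : ∀ i, m ≤ i → i < m + l → a i = k + 1 := fun i hi1 hi2 => by
    rw [hf, if_neg (by omega), if_pos hi2]
  have hf1 : ∀ i, m + l ≤ i → i < m + l + s → a i = 1 := fun i hi1 hi2 => by
    rw [hf, if_neg (by omega), if_neg (by omega), if_pos hi2]
  have hf0 : ∀ i, m + l + s ≤ i → a i = 0 := fun i hi => by
    rw [hf, if_neg (by omega), if_neg (by omega), if_neg (by omega)]
  have hPn : m + l + s ≤ n := by
    by_contra h
    have h0 := ha.2.2 n le_rfl
    have h1 := hf n
    rcases Nat.lt_or_ge n m with h2 | h2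
    · rw [if_pos h2] at h1; omega
    · rcases Nat.lt_or_ge n (m+l) with h3 | h3
      · rw [if_neg (by omega), if_pos h3] at h1; omega
      · rw [if_neg (by omega), if_neg (by omega), if_pos (by omega)] at h1; omega
  have hSa1 : ∀ j, j ≤ m → S a j = (k+2) * j := fun j hj => S_head hfk hj
  have hSa2 : ∀ d, d ≤ l → S a (m + d) = (k+2) * m + (k+1) * d := by
    intro d hd
    have := S_block (lo := m) (hi := m + l) (v := k+1) (j := m + d) hfk1 (by omega) (by omega)
    rw [this, hSa1 m le_rfl, (by omega : m + d - m = d)]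
  have hSa3 : ∀ d, d ≤ s → S a (m + l + d) = (k+2) * m + (k+1) * l + d := by
    intro d hd
    have h1 := S_block (lo := m+l) (hi := m + l + s) (v := 1) (j := m + l + d) hf1 (by omega) (by omega)
    have h2 := hSa2 l le_rfl
    rw [h1]
    rw [(by omega : m + l + d - (m + l) = d)]
    omega
  have hn : n = (k+2) * m + (k+1) * l + s := by
    have h1 := S_split a hPn
    have hz : ∑ t ∈ Finset.Ico (m+l+s) n, a t = 0 :=
      Finset.sum_eq_zero (fun t ht => hf0 t (Finset.mem_Ico.mp ht).1)
    have h2 := hSa3 s le_rfl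
    have h3 : S a n = n := ha.2.1
    omega
  have hbm : m ≤ (k+2) * m := Nat.le_mul_of_pos_left m (by omega)
  have hbl : l ≤ (k+1) * l := Nat.le_mul_of_pos_left l (by omega)
  have hpltn : m + l < n := by omega
  have hv : Valid n a (m+l-1) (m+l) := by
    refine ⟨by omega, hpltn, ?_, ?_, ?_⟩
    · rw [(by omega : m + l - 1 + 1 = m + l), hf1 (m+l) le_rfl (by omega),
        hfk1 (m+l-1) (by omega) (by omega)]
      omega
    · rw [hf1 (m+l) le_rfl (by omega), hfk1 (m+l-1) (by omega) (by omega)]; omega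
    · intro _
      rw [hf1 (m+l) le_rfl (by omega), hfk1 (m+l-1) (by omega) (by omega)]; omega
  refine joinIrr_of_key ha ?_ hv ?_
  · rw [hfk 0 (by omega)]; omega
  · intro b j hb hdom hj1 hj2 hje
    have hjm : j = m + l := by omega
    rw [hjm] at hje
    have hbS : ∀ jj, S b jj ≤ S a jj := fun jj => hdom jj
    have hx1 : k + 2 - 1 = k + 1 := by omega
    have hml2 := ml2 hb.1 (x := k+2) (α := m) (β := l) (by omega) hm
      (fun i hi => le_trans (hbS i) (le_of_eq (hSa1 i hi)))
      (fun d hd => by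
        rw [hx1]
        exact le_trans (hbS (m+d)) (le_of_eq (hSa2 d hd)))
      (by rw [hx1, hje, hSa2 l le_rfl])
    obtain ⟨hh, hh2⟩ := hml2
    rw [hx1] at hh2
    have hSbp : S b (m+l) = (k+2) * m + (k+1) * l := by
      rw [hje]
      exact hSa2 l le_rfl
    have hbp : b (m+l) ≤ 1 := by
      have h1 : S b (m+l+1) ≤ S a (m+l+1) := hbS (m+l+1)
      have h2 : S a (m+l+1) = (k+2) * m + (k+1) * l + 1 := by
        have := hSa3 1 hs
        simpa using this
      have h3 := S_succ b (m+l)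
      omega
    have hble : ∀ i, m + l ≤ i → b i ≤ 1 := fun i hi => le_trans (hb.1 (m+l) i hi) hbp
    have htail : ∑ t ∈ Finset.Ico (m+l) n, b t = s := by
      have h1 := S_split b (show m + l ≤ n by omega)
      have h2 : S b n = n := hb.2.1
      omega
    have hml3 := ml3 hb.1 (N := n) (j := m+l) (c := s) hble hb.2.2 htail
    obtain ⟨ht1, ht2⟩ := hml3
    funext i
    rw [hf i]
    by_cases him : i < m
    · rw [if_pos him]; exact hh i him
    · rw [if_neg him]
      by_cases hil : i < m + l
      · rw [if_pos hil]; exact hh2 i (by omega) (by omega)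
      · rw [if_neg hil]
        by_cases his : i < m + l + s
        · rw [if_pos his]; exact ht1 i (by omega) (by omega)
        · rw [if_neg his]; exact ht2 i (by omega)

lemma typeB {n : ℕ} {a : ℕ → ℕ} (ha : IsPartition n a) {k m l : ℕ}
    (hk : 2 ≤ k) (hm : 1 ≤ m) (hl : 1 ≤ l)
    (hf : ∀ i, a i = if i < m then k else if i < m + l then k - 1 else 0) : JoinIrr n a := by
  have hfk : ∀ i, i < m → a i = k := fun i hi => by rw [hf, if_pos hi]
  have hfk1 : ∀ i, m ≤ i → i < m + l → a i = k - 1 := fun i hi1 hi2 => by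
    rw [hf, if_neg (by omega), if_pos hi2]
  have hf0 : ∀ i, m + l ≤ i → a i = 0 := fun i hi => by
    rw [hf, if_neg (by omega), if_neg (by omega)]
  have hpn : m + l ≤ n := by
    by_contra h
    have h0 := ha.2.2 n le_rfl
    have h1 := hf n
    rcases Nat.lt_or_ge n m with h2 | h2
    · rw [if_pos h2] at h1; omega
    · rw [if_neg (by omega), if_pos (by omega)] at h1; omega
  have hSa1 : ∀ j, j ≤ m → S a j = k * j := fun j hj => S_head hfk hj
  have hSa2 : ∀ d, d ≤ l → S a (m + d) = k * m + (k-1) * d := by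
    intro d hd
    have := S_block (lo := m) (hi := m + l) (v := k-1) (j := m + d) hfk1 (by omega) (by omega)
    rw [this, hSa1 m le_rfl, (by omega : m + d - m = d)]
  have hn : n = k * m + (k-1) * l := by
    have h1 := S_split a hpn
    have hz : ∑ t ∈ Finset.Ico (m+l) n, a t = 0 :=
      Finset.sum_eq_zero (fun t ht => hf0 t (Finset.mem_Ico.mp ht).1)
    have h2 := hSa2 l le_rfl
    have h3 : S a n = n := ha.2.1
    omega
  have hbm : 2 * m ≤ k * m := Nat.mul_le_mul_right m hk
  rcases Nat.lt_or_ge k 3 with hk2 | hk3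
  · -- k = 2
    have hk2' : k = 2 := by omega
    subst hk2'
    have hpltn : m + l < n := by omega
    have hv : Valid n a (m-1) (m+l) := by
      refine ⟨by omega, hpltn, ?_, ?_, ?_⟩
      · rw [(by omega : m - 1 + 1 = m), hfk1 m le_rfl (by omega), hfk (m-1) (by omega)]
      · rw [hf0 (m+l) le_rfl, hfk1 (m+l-1) (by omega) (by omega)]
      · intro h
        exact absurd h (by omega)
    refine joinIrr_of_key ha ?_ hv ?_
    · rw [hfk 0 (by omega)]
    · intro b j hb hdom hj1 hj2 hje
      have hjm : m ≤ j := by omega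
      have hbS : ∀ jj, S b jj ≤ S a jj := fun jj => hdom jj
      have hSaj : S a j = 2 * m + (j - m) := by
        have := hSa2 (j - m) (by omega)
        rw [(by omega : m + (j - m) = j)] at this
        omega
      have hml2 := ml2 hb.1 (x := 2) (α := m) (β := j - m) (by omega) hm
        (fun i hi => le_trans (hbS i) (le_of_eq (hSa1 i hi)))
        (fun d hd => by
          have := hSa2 d (by omega)
          exact le_trans (hbS (m+d)) (by omega))
        (by
          rw [(by omega : m + (j - m) = j), hje]
          omega)
      obtain ⟨hh, hh2⟩ := hml2
      have hbj : b j ≤ 1 := by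
        have h1 : S b (j+1) ≤ S a (j+1) := hbS (j+1)
        have h2 : S a (j+1) ≤ S a j + 1 := by
          have h4 := S_succ a j
          have h5 : a j ≤ 1 := by
            rcases Nat.lt_or_ge j (m+l) with h6 | h6
            · rw [hfk1 j (by omega) h6]
            · rw [hf0 j h6]; omega
          omega
        have h3 := S_succ b j
        omega
      have hble : ∀ i, j ≤ i → b i ≤ 1 := fun i hi => le_trans (hb.1 j i hi) hbj
      have htail : ∑ t ∈ Finset.Ico j n, b t = m + l - j := by
        have h1 := S_split b (show j ≤ n by omega)
        have h2 : S b n = n := hb.2.1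
        omega
      have hml3 := ml3 hb.1 (N := n) (j := j) (c := m + l - j) hble hb.2.2 htail
      obtain ⟨ht1, ht2⟩ := hml3
      funext i
      rw [hf i]
      by_cases him : i < m
      · rw [if_pos him]; exact hh i him
      · rw [if_neg him]
        by_cases hil : i < m + l
        · rw [if_pos hil]
          rcases Nat.lt_or_ge i j with h7 | h7
          · exact hh2 i (by omega) (by omega)
          · exact ht1 i h7 (by omega)
        · rw [if_neg hil]; exact ht2 i (by omega)
  · -- k ≥ 3
    have hbl : 2 * l ≤ (k-1) * l := Nat.mul_le_mul_right l (by omega)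
    have hpltn : m + l < n := by omega
    have hv : Valid n a (m+l-1) (m+l) := by
      refine ⟨by omega, hpltn, ?_, ?_, ?_⟩
      · rw [(by omega : m + l - 1 + 1 = m + l), hf0 (m+l) le_rfl,
          hfk1 (m+l-1) (by omega) (by omega)]
        omega
      · rw [hf0 (m+l) le_rfl, hfk1 (m+l-1) (by omega) (by omega)]; omega
      · intro _
        rw [hf0 (m+l) le_rfl, hfk1 (m+l-1) (by omega) (by omega)]; omega
    refine joinIrr_of_key ha ?_ hv ?_
    · rw [hfk 0 (by omega)]; omega
    · intro b j hb hdom hj1 hj2 hje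
      have hjm : j = m + l := by omega
      rw [hjm] at hje
      have hbS : ∀ jj, S b jj ≤ S a jj := fun jj => hdom jj
      have hml2 := ml2 hb.1 (x := k) (α := m) (β := l) (by omega) hm
        (fun i hi => le_trans (hbS i) (le_of_eq (hSa1 i hi)))
        (fun d hd => le_trans (hbS (m+d)) (le_of_eq (hSa2 d hd)))
        (by rw [hje, hSa2 l le_rfl])
      obtain ⟨hh, hh2⟩ := hml2
      have hSbp : S b (m+l) = k * m + (k-1) * l := by
        rw [hje]
        exact hSa2 l le_rfl
      have htail : ∑ t ∈ Finset.Ico (m+l) n, b t = 0 := by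
        have h1 := S_split b (show m + l ≤ n by omega)
        have h2 : S b n = n := hb.2.1
        omega
      funext i
      rw [hf i]
      by_cases him : i < m
      · rw [if_pos him]; exact hh i him
      · rw [if_neg him]
        by_cases hil : i < m + l
        · rw [if_pos hil]; exact hh2 i (by omega) (by omega)
        · rw [if_neg hil]
          rcases Nat.lt_or_ge i n with hin | hin
          · exact (Finset.sum_eq_zero_iff.mp htail) i (Finset.mem_Ico.mpr ⟨by omega, hin⟩)
          · exact hb.2.2 i hin

end Bry

/-- Brylawski's four types of join-irreducible partitions. -/
theorem stmt9 (n : ℕ) (hn : 1 ≤ n) :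
    ∀ a, IsPartition n a →
      (JoinIrr n a ↔
        -- Type A: m copies of k, k ≥ 2
        (∃ k m, 2 ≤ k ∧ 1 ≤ m ∧ ∀ i, a i = if i < m then k else 0) ∨
        -- Type B: m copies of k then l copies of k−1, k ≥ 2
        (∃ k m l, 2 ≤ k ∧ 1 ≤ m ∧ 1 ≤ l ∧
          ∀ i, a i = if i < m then k else if i < m + l then k - 1 else 0) ∨
        -- Type C: m copies of k then l copies of 1, k ≥ 3
        (∃ k m l, 3 ≤ k ∧ 1 ≤ m ∧ 1 ≤ l ∧
          ∀ i, a i = if i < m then k else if i < m + l then 1 else 0) ∨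
        -- Type D: m copies of k+2, l copies of k+1, s copies of 1, k ≥ 2
        (∃ k m l s, 2 ≤ k ∧ 1 ≤ m ∧ 1 ≤ l ∧ 1 ≤ s ∧
          ∀ i, a i = if i < m then k + 2 else if i < m + l then k + 1
            else if i < m + l + s then 1 else 0)) := by
  intro a ha
  constructor
  · intro hJ
    obtain ⟨_, hnones, hJ3⟩ := hJ
    obtain ⟨hmono, hsum', hsupp⟩ := ha
    have haP : IsPartition n a := ⟨hmono, hsum', hsupp⟩
    have hK : 2 ≤ a 0 := by
      by_contra h
      push_neg at h
      apply hnones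
      funext i
      show a i = if i < n then 1 else 0
      by_cases hin : i < n
      · rw [if_pos hin]
        by_contra hne
        have hai : a i = 0 := by have := hmono 0 i (Nat.zero_le i); omega
        have hlt : ∑ t ∈ Finset.range n, a t < ∑ t ∈ Finset.range n, (fun _ => 1 : ℕ → ℕ) t := by
          apply Finset.sum_lt_sum
          · intro t ht
            have := hmono 0 t (Nat.zero_le t)
            omega
          · exact ⟨i, Finset.mem_range.mpr hin, by omega⟩
        simp at hlt
        omega
      · rw [if_neg hin]; exact hsupp i (by omega)
    have contra : ∀ r s r' s', Bry.Valid n a r s → Bry.Valid n a r' s' → s ≤ r' + 1 →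
        (s = r' + 1 → a (s-1) = a s + 1) → False := by
      intro r s r' s' v1 v2 hord hadj
      obtain ⟨hs, hne1, hne2⟩ := Bry.sup2 haP v1 v2 hord hadj
      rcases hJ3 _ _ (Bry.mov_isPartition haP v1) (Bry.mov_isPartition haP v2) hs with h | h
      · exact hne1 h.symm
      · exact hne2 h.symm
    have hex1 : ∃ i, a i < a 0 := ⟨n, by have := hsupp n le_rfl; omega⟩
    set m := Nat.find hex1 with hmdef
    have hmspec : a m < a 0 := Nat.find_spec hex1
    have hmmin : ∀ i, i < m → ¬ a i < a 0 := fun i hi => Nat.find_min hex1 hi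
    have hm1 : 1 ≤ m := by
      rcases Nat.eq_zero_or_pos m with h | h
      · exfalso; rw [h] at hmspec; omega
      · exact h
    have hblk1 : ∀ i, i < m → a i = a 0 := by
      intro i hi
      have h1 := hmmin i hi
      have h2 := hmono 0 i (Nat.zero_le i)
      omega
    have hmn : m < n := Bry.size_lt haP (u := 0) (v := m) hm1 hK
      (fun i hi => by rw [hblk1 i hi]; omega)
    by_cases hv2 : a m = 0
    · left
      refine ⟨a 0, m, hK, hm1, fun i => ?_⟩
      by_cases him : i < m
      · rw [if_pos him]; exact hblk1 i him
      · rw [if_neg him]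
        have := hmono m i (by omega)
        omega
    · have hv21 : 1 ≤ a m := by omega
      have hex2 : ∃ i, a i < a m := ⟨n, by have := hsupp n le_rfl; omega⟩
      set p := Nat.find hex2 with hpdef
      have hpspec : a p < a m := Nat.find_spec hex2
      have hpmin : ∀ i, i < p → ¬ a i < a m := fun i hi => Nat.find_min hex2 hi
      have hmp : m < p := by
        rcases Nat.lt_or_ge m p with h | h
        · exact h
        · exfalso
          have := hmono p m h
          omega
      have hblk2 : ∀ i, m ≤ i → i < p → a i = a m := by
        intro i hi1 hi2
        have h1 := hpmin i hi2
        have h2 := hmono m i hi1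
        omega
      have hpn : p < n := Bry.size_lt haP (u := 0) (v := p) (by omega) hK
        (fun i hi => by
          rcases Nat.lt_or_ge i m with h | h
          · rw [hblk1 i h]; omega
          · rw [hblk2 i h hi]; omega)
      by_cases hgap1 : a m + 2 ≤ a 0
      · by_cases hv22 : 2 ≤ a m
        · exfalso
          obtain ⟨r', s', hr', hv'⟩ := Bry.exists_move haP (r := m) hv22
          have v1 : Bry.Valid n a (m-1) m := by
            refine ⟨by omega, hmn, ?_, ?_, fun _ => ?_⟩
            · rw [(by omega : m - 1 + 1 = m), hblk1 (m-1) (by omega)]; omega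
            · rw [hblk1 (m-1) (by omega)]; omega
            · rw [hblk1 (m-1) (by omega)]; omega
          exact contra _ _ _ _ v1 hv' (by omega) (fun h => absurd h (by omega))
        · right; right; left
          refine ⟨a 0, m, p - m, by omega, hm1, by omega, fun i => ?_⟩
          by_cases him : i < m
          · rw [if_pos him]; exact hblk1 i him
          · rw [if_neg him]
            by_cases hip : i < m + (p - m)
            · rw [if_pos hip]
              have := hblk2 i (by omega) (by omega)
              omega
            · rw [if_neg hip]
              have := hmono p i (by omega)
              omega
      · have hg1 : a 0 = a m + 1 := by omega
        by_cases hv22 : 2 ≤ a m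
        · by_cases hgap2 : a p + 2 ≤ a m
          · by_cases hv32 : 2 ≤ a p
            · exfalso
              obtain ⟨r', s', hr', hv'⟩ := Bry.exists_move haP (r := p) hv32
              have v1 : Bry.Valid n a (p-1) p := by
                refine ⟨by omega, hpn, ?_, ?_, fun _ => ?_⟩
                · rw [(by omega : p - 1 + 1 = p), hblk2 (p-1) (by omega) (by omega)]; omega
                · rw [hblk2 (p-1) (by omega) (by omega)]; omega
                · rw [hblk2 (p-1) (by omega) (by omega)]; omega
              exact contra _ _ _ _ v1 hv' (by omega) (fun h => absurd h (by omega))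
            · by_cases hv30 : a p = 0
              · right; left
                refine ⟨a 0, m, p - m, by omega, hm1, by omega, fun i => ?_⟩
                by_cases him : i < m
                · rw [if_pos him]; exact hblk1 i him
                · rw [if_neg him]
                  by_cases hip : i < m + (p - m)
                  · rw [if_pos hip]
                    have := hblk2 i (by omega) (by omega)
                    omega
                  · rw [if_neg hip]
                    have := hmono p i (by omega)
                    omega
              · have hv31 : a p = 1 := by omega
                have hex3 : ∃ i, a i < a p := ⟨n, by have := hsupp n le_rfl; omega⟩
                set q := Nat.find hex3 with hqdef
                have hqspec : a q < a p := Nat.find_spec hex3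
                have hqmin : ∀ i, i < q → ¬ a i < a p := fun i hi => Nat.find_min hex3 hi
                have hpq : p < q := by
                  rcases Nat.lt_or_ge p q with h | h
                  · exact h
                  · exfalso; have := hmono q p h; omega
                have hblk3 : ∀ i, p ≤ i → i < q → a i = 1 := by
                  intro i h1 h2
                  have h3 := hqmin i h2
                  have h4 := hmono p i h1
                  omega
                right; right; right
                refine ⟨a m - 1, m, p - m, q - p, by omega, hm1, by omega, by omega,
                  fun i => ?_⟩
                by_cases him : i < m
                · rw [if_pos him, hblk1 i him]; omega
                · rw [if_neg him]
                  by_cases hip : i < m + (p - m)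
                  · rw [if_pos hip, hblk2 i (by omega) (by omega)]; omega
                  · rw [if_neg hip]
                    by_cases hiq : i < m + (p - m) + (q - p)
                    · rw [if_pos hiq]; exact hblk3 i (by omega) (by omega)
                    · rw [if_neg hiq]
                      have := hmono q i (by omega)
                      omega
          · exfalso
            have hg2 : a m = a p + 1 := by omega
            have v1 : Bry.Valid n a (m-1) p := by
              refine ⟨by omega, hpn, ?_, ?_, fun h => absurd h (by omega)⟩
              · rw [(by omega : m - 1 + 1 = m), hblk1 (m-1) (by omega)]; omega
              · rw [hblk2 (p-1) (by omega) (by omega)]; omega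
            by_cases hv32 : 2 ≤ a p
            · obtain ⟨r', s', hr', hv'⟩ := Bry.exists_move haP (r := p) hv32
              exact contra _ _ _ _ v1 hv' (by omega) (fun h => absurd h (by omega))
            · have hv31 : a p = 1 := by omega
              have hex3 : ∃ i, a i < a p := ⟨n, by have := hsupp n le_rfl; omega⟩
              set q := Nat.find hex3 with hqdef
              have hqspec : a q < a p := Nat.find_spec hex3
              have hqmin : ∀ i, i < q → ¬ a i < a p := fun i hi => Nat.find_min hex3 hi
              have hpq : p < q := by
                rcases Nat.lt_or_ge p q with h | h
                · exact h
                · exfalso; have := hmono q p h; omega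
              have hblk3 : ∀ i, p ≤ i → i < q → a i = 1 := by
                intro i h1 h2
                have h3 := hqmin i h2
                have h4 := hmono p i h1
                omega
              have hqn : q < n := Bry.size_lt haP (u := 0) (v := q) (by omega) hK
                (fun i hi => by
                  rcases Nat.lt_or_ge i m with h | h
                  · rw [hblk1 i h]; omega
                  · rcases Nat.lt_or_ge i p with h2 | h2
                    · rw [hblk2 i h h2]; omega
                    · rw [hblk3 i h2 hi])
              have v2' : Bry.Valid n a (p-1) q := by
                refine ⟨by omega, hqn, ?_, ?_, fun h => absurd h (by omega)⟩
                · rw [(by omega : p - 1 + 1 = p), hblk2 (p-1) (by omega) (by omega)]; omega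
                · rw [hblk3 (q-1) (by omega) (by omega)]; omega
              refine contra _ _ _ _ v1 v2' (by omega) (fun _ => ?_)
              rw [hblk2 (p-1) (by omega) (by omega)]
              omega
        · right; left
          refine ⟨2, m, p - m, le_rfl, hm1, by omega, fun i => ?_⟩
          by_cases him : i < m
          · rw [if_pos him, hblk1 i him]; omega
          · rw [if_neg him]
            by_cases hip : i < m + (p - m)
            · rw [if_pos hip, hblk2 i (by omega) (by omega)]; omega
            · rw [if_neg hip]
              have := hmono p i (by omega)
              omega
  · rintro (⟨k, m, hk, hm, hf⟩ | ⟨k, m, l, hk, hm, hl, hf⟩ | ⟨k, m, l, hk, hm, hl, hf⟩ |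
      ⟨k, m, l, s, hk, hm, hl, hs, hf⟩)
    · exact Bry.typeA ha hk hm hf
    · exact Bry.typeB ha hk hm hl hf
    · exact Bry.typeC ha hk hm hl hf
    · exact Bry.typeD ha hk hm hl hs hf
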